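/- arXiv:1309.4748 — 2 statements merged into one kernel-verified Lean document; each statement's English description precedes it below -/
import Mathlib

section
/- Let $K$ be a totally real number field of degree $d \geq 2$ that is Galois over $\mathbb{Q}$ with Galois group $G$. Let $\mathbf{s} = (s_\tau)_{\tau \in G}$ be a tuple with each $s_\tau \in \{0, 12\}$, which is not constantly $0$ and not constantly $12$. Then there exists a unit $\epsilon$ of the ring of integers of $K$ such that $\prod_{\tau \in G} \tau(\epsilon)^{s_\tau} \neq 1$. -/
open NumberField

theorem twisted_norm_of_unit_ne_one
    (K : Type*) [Field K] [NumberField K] [IsGalois ℚ K]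
    (d : ℕ) (hd : 2 ≤ d) (hdeg : Module.finrank ℚ K = d)
    (htr : ∀ φ : K →+* ℂ, ComplexEmbedding.IsReal φ)
    (s : (K ≃ₐ[ℚ] K) → ℕ) (hs : ∀ τ, s τ = 0 ∨ s τ = 12)
    (hs0 : ¬ ∀ τ, s τ = 0) (hs12 : ¬ ∀ τ, s τ = 12) :
    ∃ ε : (𝓞 K)ˣ, ∏ τ : K ≃ₐ[ℚ] K, τ ((ε : 𝓞 K) : K) ^ s τ ≠ 1 := by
  -- a fixed complex embedding
  obtain ⟨φ₀⟩ : Nonempty (K →+* ℂ) := inferInstance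
  -- the associated family of infinite places
  set w : (K ≃ₐ[ℚ] K) → InfinitePlace K :=
    fun τ => InfinitePlace.mk (φ₀.comp (τ : K →+* K)) with hw
  have hwinj : Function.Injective w := by
    intro τ τ' h
    rcases InfinitePlace.mk_eq_iff.mp h with h' | h'
    · have : (τ : K →+* K) = (τ' : K →+* K) := by
        ext x
        exact φ₀.injective (RingHom.congr_fun h' x)
      ext x
      exact RingHom.congr_fun this x
    · rw [(ComplexEmbedding.isReal_iff).mp (htr (φ₀.comp (τ : K →+* K)))] at h'
      have : (τ : K →+* K) = (τ' : K →+* K) := by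
        ext x
        exact φ₀.injective (RingHom.congr_fun h' x)
      ext x
      exact RingHom.congr_fun this x
  -- choose τ₁ with s τ₁ = 0 and τ₂ with s τ₂ = 12
  push_neg at hs0 hs12
  obtain ⟨τ₂, hτ₂⟩ := hs0
  obtain ⟨τ₁, hτ₁⟩ := hs12
  have hsτ₁ : s τ₁ = 0 := (hs τ₁).resolve_right hτ₁
  have hsτ₂ : s τ₂ = 12 := (hs τ₂).resolve_left hτ₂
  -- the unit from Dirichlet's theorem machinery
  obtain ⟨u, hu⟩ := NumberField.Units.dirichletUnitTheorem.exists_unit K (w τ₁)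
  refine ⟨u, fun hcontra => ?_⟩
  -- apply φ₀ and take absolute values and logs
  have habs : ∏ τ : K ≃ₐ[ℚ] K, (w τ) ((u : 𝓞 K) : K) ^ s τ = 1 := by
    have := congr_arg (fun x => ‖φ₀ x‖) hcontra
    simpa only [map_prod, map_pow, map_one, norm_prod, norm_pow, norm_one, hw, InfinitePlace.apply,
      RingHom.coe_comp, Function.comp_apply, RingHom.coe_coe] using this
  have hne : ∀ τ : K ≃ₐ[ℚ] K, (w τ) ((u : 𝓞 K) : K) ^ s τ ≠ 0 := by
    intro τ
    refine pow_ne_zero _ ?_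
    simp only [ne_eq, map_eq_zero]
    exact NumberField.RingOfIntegers.coe_ne_zero_iff.mpr u.ne_zero
  have hlog : ∑ τ : K ≃ₐ[ℚ] K, (s τ : ℝ) * Real.log ((w τ) ((u : 𝓞 K) : K)) = 0 := by
    have := congr_arg Real.log habs
    rw [Real.log_prod (fun τ _ => hne τ), Real.log_one] at this
    simpa only [Real.log_pow] using this
  -- each term is ≤ 0, and the τ₂ term is < 0
  have hterm : ∀ τ : K ≃ₐ[ℚ] K,
      (s τ : ℝ) * Real.log ((w τ) ((u : 𝓞 K) : K)) ≤ 0 := by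
    intro τ
    rcases hs τ with h | h
    · simp [h]
    · have hτne : τ ≠ τ₁ := fun he => by rw [he, hsτ₁] at h; exact absurd h (by norm_num)
      have := hu (w τ) (fun he => hτne (hwinj he))
      have h12 : (0 : ℝ) < (s τ : ℝ) := by rw [h]; norm_num
      nlinarith
  have hterm₂ : (s τ₂ : ℝ) * Real.log ((w τ₂) ((u : 𝓞 K) : K)) < 0 := by
    have hτne : τ₂ ≠ τ₁ := fun he => by rw [he, hsτ₁] at hsτ₂; exact absurd hsτ₂ (by norm_num)
    have := hu (w τ₂) (fun he => hτne (hwinj he))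
    have h12 : (0 : ℝ) < (s τ₂ : ℝ) := by rw [hsτ₂]; norm_num
    nlinarith
  have hlt : ∑ τ : K ≃ₐ[ℚ] K, (s τ : ℝ) * Real.log ((w τ) ((u : 𝓞 K) : K)) <
      ∑ _τ : K ≃ₐ[ℚ] K, (0 : ℝ) :=
    Finset.sum_lt_sum (fun τ _ => hterm τ) ⟨τ₂, Finset.mem_univ τ₂, hterm₂⟩
  rw [hlog] at hlt
  simp at hlt
end

section
/- Let $K$ be a totally real Galois number field of degree $d \geq 2$ with Galois group $G$ and unit group basis $\epsilon_1, \ldots, \epsilon_{d-1}$ (modulo torsion). For a nonconstant tuple $\mathbf{s} \in \{0,12\}^G$, define the ideal $\mathfrak{a}_\mathbf{s} = \gcd((\mathcal{N}_\mathbf{s}(\epsilon_1) - 1)\mathcal{O}_K, \ldots, (\mathcal{N}_\mathbf{s}(\epsilon_{d-1}) - 1)\mathcal{O}_K)$ and $A_\mathbf{s} = \mathrm{Nm}(\mathfrak{a}_\mathbf{s})$. Then $A_\mathbf{s} \neq 0$. -/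
open NumberField

open NumberField.InfinitePlace NumberField.Units NumberField.Units.dirichletUnitTheorem in
/-- For a totally real Galois number field `K` of degree `d ≥ 2`, a system of fundamental
units `ε₁, …, ε_{d-1}` (a basis of the unit group modulo torsion) and a nonconstant
signature `s ∈ {0,12}^G`, the norm `A_s` of the ideal
`gcd((𝒩_s(ε₁)-1)𝓞_K, …, (𝒩_s(ε_{d-1})-1)𝓞_K)` is nonzero. -/
theorem As_ne_zero
    (K : Type*) [Field K] [NumberField K] [IsGalois ℚ K]
    (d : ℕ) (hd : 2 ≤ d) (hdeg : Module.finrank ℚ K = d)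
    (htr : ∀ φ : K →+* ℂ, ComplexEmbedding.IsReal φ)
    (ε : Fin (d - 1) → (𝓞 K)ˣ)
    -- `ε` generates the unit group modulo torsion
    (hgen : ∀ u : (𝓞 K)ˣ, ∃ (n : Fin (d - 1) → ℤ) (t : (𝓞 K)ˣ),
        IsOfFinOrder t ∧ u = t * ∏ i, ε i ^ n i)
    -- `ε` is independent modulo torsion
    (hind : ∀ n : Fin (d - 1) → ℤ, IsOfFinOrder (∏ i, ε i ^ n i) → n = 0)
    (s : (K ≃ₐ[ℚ] K) → ℕ) (hs : ∀ τ, s τ = 0 ∨ s τ = 12)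
    (hs0 : ¬ ∀ τ, s τ = 0) (hs12 : ¬ ∀ τ, s τ = 12)
    -- `y i` is the algebraic integer `𝒩_s(ε i) - 1`
    (y : Fin (d - 1) → 𝓞 K)
    (hy : ∀ i, ((y i : 𝓞 K) : K) = (∏ τ : K ≃ₐ[ℚ] K, τ ((ε i : 𝓞 K) : K) ^ s τ) - 1) :
    Ideal.absNorm (⨆ i, Ideal.span {y i}) ≠ 0 := by
  classical
  rw [Ne, Ideal.absNorm_eq_zero_iff]
  intro hbot
  -- Step 0: all `y i` vanish, so all twisted norms are `1`.
  have hy0 : ∀ i, y i = 0 := by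
    intro i
    have h1 : Ideal.span {y i} ≤ ⊥ := hbot ▸ le_iSup (fun i => Ideal.span {y i}) i
    simpa [Ideal.span_singleton_eq_bot] using le_bot_iff.mp h1
  have hprod : ∀ i, (∏ τ : K ≃ₐ[ℚ] K, τ ((ε i : 𝓞 K) : K) ^ s τ) = 1 := by
    intro i
    have h := hy i
    rw [hy0 i] at h
    push_cast at h
    exact sub_eq_zero.mp h.symm
  -- All places are real
  have hreal : ∀ w : InfinitePlace K, w.IsReal := fun w => isReal_iff.mpr (htr _)
  have hmult : ∀ w : InfinitePlace K, mult w = 1 := fun w => by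
    rw [mult, if_pos (hreal w)]
  have hconj : ∀ φ : K →+* ℂ, ComplexEmbedding.conjugate φ = φ :=
    fun φ => ComplexEmbedding.isReal_iff.mp (htr φ)
  have hmkinj : Function.Injective (mk : (K →+* ℂ) → InfinitePlace K) := by
    intro φ ψ h
    rcases mk_eq_iff.mp h with h' | h'
    · exact h'
    · rwa [hconj φ] at h'
  -- the bijection between the Galois group and the infinite places
  set m : (K ≃ₐ[ℚ] K) → InfinitePlace K :=
    fun τ => mk (((w₀ : InfinitePlace K).embedding).comp τ.toAlgHom.toRingHom) with hm
  have hmapply : ∀ τ (x : K), m τ x = (w₀ : InfinitePlace K) (τ x) := by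
    intro τ x
    rw [hm]
    simp only [InfinitePlace.apply, RingHom.coe_comp, Function.comp_apply]
    rw [norm_embedding_eq]
    rfl
  have hminj : Function.Injective m := by
    intro τ τ' h
    have h2 := hmkinj h
    ext x
    have h3 := congrFun (congrArg (↑·) h2) x
    simpa using (w₀ : InfinitePlace K).embedding.injective h3
  have hmbij : Function.Bijective m := by
    rw [Fintype.bijective_iff_injective_and_card]
    refine ⟨hminj, ?_⟩
    have hc1 : Fintype.card (K ≃ₐ[ℚ] K) = Module.finrank ℚ K :=
      by rw [← Nat.card_eq_fintype_card]; exact IsGalois.card_aut_eq_finrank ℚ K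
    have hmkbij : Function.Bijective (mk : (K →+* ℂ) → InfinitePlace K) :=
      ⟨hmkinj, fun w => ⟨w.embedding, mk_embedding w⟩⟩
    rw [hc1, ← NumberField.Embeddings.card K ℂ, Fintype.card_of_bijective hmkbij]
  set e : (K ≃ₐ[ℚ] K) ≃ InfinitePlace K := Equiv.ofBijective m hmbij with he
  set S : InfinitePlace K → ℕ := fun w => s (e.symm w) with hS
  have hSe : ∀ τ, S (e τ) = s τ := fun τ => congrArg s (e.symm_apply_apply τ)
  -- the basic vanishing sum over all places
  have keysum : ∀ i, ∑ w : InfinitePlace K,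
      (S w : ℝ) * Real.log (w ((ε i : 𝓞 K) : K)) = 0 := by
    intro i
    have h1 : ∏ w : InfinitePlace K, (w ((ε i : 𝓞 K) : K)) ^ S w = 1 := by
      rw [← Equiv.prod_comp e (fun w => (w ((ε i : 𝓞 K) : K)) ^ S w)]
      have heq : ∀ τ, ((e τ) ((ε i : 𝓞 K) : K)) ^ S (e τ)
          = (w₀ : InfinitePlace K) ((τ ((ε i : 𝓞 K) : K)) ^ s τ) := by
        intro τ
        rw [hSe τ, map_pow]
        congr 1
        exact hmapply τ _
      rw [Finset.prod_congr rfl (fun τ _ => heq τ), ← map_prod, hprod i, map_one]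
    have h2 := congrArg Real.log h1
    rw [Real.log_prod (fun w _ =>
      pow_ne_zero _ ((map_ne_zero w).mpr (coe_ne_zero (ε i)))), Real.log_one] at h2
    simpa [Real.log_pow] using h2
  -- the linear functional
  set c : {w : InfinitePlace K // w ≠ w₀} → ℝ := fun w => (S w.1 : ℝ) - (S w₀ : ℝ) with hc
  set F : ({w : InfinitePlace K // w ≠ w₀} → ℝ) →ₗ[ℝ] ℝ :=
    ∑ w : {w : InfinitePlace K // w ≠ w₀}, c w • LinearMap.proj w with hF
  have hFapply : ∀ x, F x = ∑ w : {w : InfinitePlace K // w ≠ w₀}, c w * x w := by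
    intro x
    rw [hF]
    simp [LinearMap.proj_apply]
  have hkey : ∀ i, F (logEmbedding K (Additive.ofMul (ε i))) = 0 := by
    intro i
    set L : InfinitePlace K → ℝ := fun w => Real.log (w ((ε i : 𝓞 K) : K)) with hL
    have hcomp : ∀ w : {w : InfinitePlace K // w ≠ w₀},
        logEmbedding K (Additive.ofMul (ε i)) w = L w.1 := by
      intro w
      rw [logEmbedding_component, hmult w.1, hL]
      push_cast
      rw [one_mul]
    have hsub : ∀ f : InfinitePlace K → ℝ,
        ∑ w ∈ Finset.univ.erase (w₀ : InfinitePlace K), f w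
          = ∑ w : {w : InfinitePlace K // w ≠ w₀}, f w.1 := by
      intro f
      exact (Finset.sum_subtype _ (fun w =>
        ⟨Finset.ne_of_mem_erase, fun h =>
          Finset.mem_erase_of_ne_of_mem h (Finset.mem_univ w)⟩) f)
    have htot : (S w₀ : ℝ) * L w₀ + ∑ w : {w : InfinitePlace K // w ≠ w₀},
        (S w.1 : ℝ) * L w.1 = 0 := by
      have h := keysum i
      rw [← Finset.add_sum_erase _ (fun w => (S w : ℝ) * L w) (Finset.mem_univ w₀)] at h
      rwa [hsub (fun w => (S w : ℝ) * L w)] at h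
    have hB : ∑ w : {w : InfinitePlace K // w ≠ w₀}, L w.1 = - L w₀ := by
      have h := sum_logEmbedding_component (K := K) (ε i)
      rw [show (∑ w : {w : InfinitePlace K // w ≠ w₀},
          logEmbedding K (Additive.ofMul (ε i)) w)
            = ∑ w : {w : InfinitePlace K // w ≠ w₀}, L w.1
          from Finset.sum_congr rfl (fun w _ => hcomp w)] at h
      rw [h, hmult w₀]
      push_cast
      rw [neg_mul, one_mul]
    rw [hFapply]
    rw [Finset.sum_congr rfl (fun w _ => by rw [hcomp w])]
    rw [hc]
    simp only [sub_mul]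
    rw [Finset.sum_sub_distrib, ← Finset.mul_sum, hB]
    linarith [htot]
  have hall : ∀ v : (𝓞 K)ˣ, F (logEmbedding K (Additive.ofMul v)) = 0 := by
    intro v
    obtain ⟨n, t, ht, rfl⟩ := hgen v
    have ht0 : logEmbedding K (Additive.ofMul t) = 0 :=
      logEmbedding_eq_zero_iff.mpr ((CommGroup.mem_torsion t).mpr ht)
    rw [ofMul_mul, map_add, ht0, zero_add, ofMul_prod]
    simp only [ofMul_zpow, map_sum, map_zsmul]
    simp [hkey]
  have hker : (⊤ : Submodule ℝ ({w : InfinitePlace K // w ≠ w₀} → ℝ)) ≤ LinearMap.ker F := by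
    rw [← unitLattice_span_eq_top]
    rw [Submodule.span_le]
    rintro x ⟨u, -, rfl⟩
    simpa using hall (Additive.toMul u)
  have hSconst : ∀ w : InfinitePlace K, S w = S w₀ := by
    intro w
    by_cases hw : w = w₀
    · rw [hw]
    · have h1 : F (Pi.single (⟨w, hw⟩ : {w : InfinitePlace K // w ≠ w₀}) 1) = 0 :=
        hker Submodule.mem_top
      rw [hFapply] at h1
      simp only [Pi.single_apply, mul_ite, mul_one, mul_zero, Finset.sum_ite_eq',
        Finset.mem_univ, if_true] at h1
      have h3 : (S w : ℝ) - S w₀ = 0 := h1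
      exact_mod_cast sub_eq_zero.mp h3
  push_neg at hs0 hs12
  obtain ⟨τ₁, h1⟩ := hs0
  obtain ⟨τ₂, h2⟩ := hs12
  have e1 : s τ₁ = 12 := (hs τ₁).resolve_left h1
  have e2 : s τ₂ = 0 := (hs τ₂).resolve_right h2
  have q1 : s τ₁ = S w₀ := by rw [← hSe τ₁, hSconst]
  have q2 : s τ₂ = S w₀ := by rw [← hSe τ₂, hSconst]
  omega
end
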